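/- arXiv:2205.14553 — 4 statements merged into one kernel-verified Lean document; each statement's English description precedes it below -/
import Mathlib

section
/- Let p ∈ R_+^N be a probability vector, i.e. ∑_{i=0}^{N-1} p_i = 1. Then for every λ ≥ 0 and every t ∈ N, H_t(p) ≤ (1 - ∑_{i=0}^{N-1} min{p_i, λ}) + λN/(t+1). -/
lemma aux_nat (t N : ℕ) : N ^ (t+1) + (t+1) * N ^ t ≤ (N+1) ^ (t+1) := by
  induction t with
  | zero => simpa using Nat.le_refl _
  | succ t ih =>
    have : (N+1) ^ (t+2) = (N+1) * (N+1)^(t+1) := by ring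
    rw [this]
    calc N ^ (t+2) + (t+2) * N ^ (t+1)
        ≤ N ^ (t+2) + (t+2) * N ^ (t+1) + (t+1) * N ^ t := Nat.le_add_right _ _
      _ = (N+1) * (N ^ (t+1) + (t+1) * N ^ t) := by ring
      _ ≤ (N+1) * (N+1)^(t+1) := Nat.mul_le_mul_left _ ih

lemma aux_sum (t N : ℕ) : (t+1) * ∑ i ∈ Finset.range N, i ^ t ≤ N ^ (t+1) := by
  induction N with
  | zero => simp
  | succ N ih =>
    rw [Finset.sum_range_succ, Nat.mul_add]
    calc (t+1) * ∑ i ∈ Finset.range N, i ^ t + (t+1) * N ^ t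
        ≤ N ^ (t+1) + (t+1) * N ^ t := by omega
      _ ≤ (N+1) ^ (t+1) := aux_nat t N

lemma aux_real (t N : ℕ) : ∑ i : Fin N, ((i : ℝ) / N) ^ t ≤ N / (t + 1) := by
  rcases Nat.eq_zero_or_pos N with h | h
  · subst h; simp
  have hN : (0:ℝ) < N := by exact_mod_cast h
  have key : ((t:ℝ)+1) * ∑ i ∈ Finset.range N, (i:ℝ) ^ t ≤ (N:ℝ) ^ (t+1) := by
    exact_mod_cast aux_sum t N
  have : ∑ i : Fin N, ((i : ℝ) / N) ^ t = (∑ i ∈ Finset.range N, (i:ℝ)^t) / N ^ t := by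
    rw [Fin.sum_univ_eq_sum_range (fun i : ℕ => ((i:ℝ)/(N:ℝ))^t) N, Finset.sum_div]
    exact Finset.sum_congr rfl fun i _ => by rw [div_pow]
  rw [this, div_le_div_iff₀ (by positivity) (by positivity)]
  calc (∑ i ∈ Finset.range N, (i:ℝ)^t) * (t+1) = ((t:ℝ)+1) * ∑ i ∈ Finset.range N, (i:ℝ)^t := by ring
    _ ≤ (N:ℝ)^(t+1) := key
    _ = N * N ^ t := by ring

/-- The `t`-th permuted moment of a vector `u ∈ ℝ^N`. -/
noncomputable def pmom (N t : ℕ) (u : Fin N → ℝ) : ℝ :=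
  Finset.univ.sup' ⟨1, Finset.mem_univ 1⟩
    (fun σ : Equiv.Perm (Fin N) => ∑ i : Fin N, ((i : ℝ) / N) ^ t * u (σ i))

/-- Truncation bound for the permuted moment of a probability vector. -/
theorem pmom_prob_bound (N t : ℕ) (p : Fin N → ℝ)
    (hp : ∀ i, 0 ≤ p i) (hsum : ∑ i : Fin N, p i = 1)
    (lam : ℝ) (hlam : 0 ≤ lam) :
    pmom N t p ≤ (1 - ∑ i : Fin N, min (p i) lam) + lam * N / (t + 1) := by
  apply Finset.sup'_le
  intro σ _
  have hw : ∀ i : Fin N, (0:ℝ) ≤ ((i : ℝ) / N) ^ t ∧ ((i : ℝ) / N) ^ t ≤ 1 := by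
    intro i
    have hi : (0:ℝ) ≤ (i:ℝ) / N := by positivity
    have hi1 : (i:ℝ) / N ≤ 1 := by
      rcases Nat.eq_zero_or_pos N with h | h
      · exact absurd i.2 (by omega)
      · rw [div_le_one (by exact_mod_cast h)]; exact_mod_cast i.2.le
    exact ⟨pow_nonneg hi t, pow_le_one₀ hi hi1⟩
  have step1 : ∑ i : Fin N, ((i : ℝ) / N) ^ t * p (σ i)
      ≤ ∑ i : Fin N, ((p (σ i) - min (p (σ i)) lam) + ((i : ℝ) / N) ^ t * min (p (σ i)) lam) := by
    apply Finset.sum_le_sum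
    intro i _
    have hm : min (p (σ i)) lam ≤ p (σ i) := min_le_left _ _
    nlinarith [(hw i).1, (hw i).2, hm]
  rw [Finset.sum_add_distrib, Finset.sum_sub_distrib] at step1
  have e1 : ∑ i : Fin N, p (σ i) = 1 := by
    rw [Equiv.sum_comp σ p, hsum]
  have e2 : ∑ i : Fin N, min (p (σ i)) lam = ∑ i : Fin N, min (p i) lam :=
    Equiv.sum_comp σ (fun i => min (p i) lam)
  have step2 : ∑ i : Fin N, ((i : ℝ) / N) ^ t * min (p (σ i)) lam ≤ lam * N / (t+1) := by
    calc ∑ i : Fin N, ((i : ℝ) / N) ^ t * min (p (σ i)) lam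
        ≤ ∑ i : Fin N, ((i : ℝ) / N) ^ t * lam := by
          apply Finset.sum_le_sum
          intro i _
          exact mul_le_mul_of_nonneg_left (min_le_right _ _) (hw i).1
      _ = (∑ i : Fin N, ((i : ℝ) / N) ^ t) * lam := by rw [Finset.sum_mul]
      _ ≤ (N / (t+1)) * lam := mul_le_mul_of_nonneg_right (aux_real t N) hlam
      _ = lam * N / (t+1) := by ring
  calc ∑ i : Fin N, ((i : ℝ) / N) ^ t * p (σ i)
      ≤ (∑ i : Fin N, p (σ i) - ∑ i : Fin N, min (p (σ i)) lam)
        + ∑ i : Fin N, ((i : ℝ) / N) ^ t * min (p (σ i)) lam := step1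
    _ ≤ (1 - ∑ i : Fin N, min (p i) lam) + lam * N / (t+1) := by
        rw [e1, e2]; linarith [step2]
end

section
/- Let G be a graph on the vertex set V = {1,...,n_w} with exactly m edges, where m ≤ L. Define ζ(x,y) for sentences x,y ∈ V^L as the graph whose edge set is {{x_ℓ, y_ℓ} : 1 ≤ ℓ ≤ L, x_ℓ ≠ y_ℓ}. Then the number of pairs (x,y) ∈ V^L × V^L with ζ(x,y) = G equals m! · ∑_{α=m}^{L} C(L,α) · S(α,m) · 2^α · n_w^{L-α}, where C(L,α) is a binomial coefficient and S(α,m) is a Stirling number of the second kind. -/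
/-- Stirling numbers of the second kind. -/
def stirling2 : ℕ → ℕ → ℕ
  | 0, 0 => 1
  | 0, _ + 1 => 0
  | _ + 1, 0 => 0
  | n + 1, k + 1 => stirling2 n k + (k + 1) * stirling2 n (k + 1)

/-- The graph (edge set) induced by a pair of sentences. -/
def zeta (nw L : ℕ) (x y : Fin L → Fin nw) : Finset (Sym2 (Fin nw)) :=
  (Finset.univ.filter (fun ℓ => x ℓ ≠ y ℓ)).image (fun ℓ => s(x ℓ, y ℓ))

open Function Finset

lemma stirling2_eq_zero : ∀ {n k : ℕ}, n < k → stirling2 n k = 0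
  | 0, 0, h => absurd h (lt_irrefl 0)
  | 0, k + 1, _ => rfl
  | n + 1, 0, h => absurd h (Nat.not_lt_zero _)
  | n + 1, k + 1, h => by
      rw [stirling2, stirling2_eq_zero (by omega), stirling2_eq_zero (by omega)]
      ring

/-- auxiliary: transporting surjection subtypes along equivs -/
noncomputable def surjEquiv {α β α' β' : Type*} (ea : α ≃ α') (eb : β ≃ β') :
    {f : α → β // Surjective f} ≃ {f : α' → β' // Surjective f} where
  toFun f := ⟨eb ∘ f.1 ∘ ea.symm,
    (Equiv.comp_surjective _ eb).mpr ((Equiv.surjective_comp ea.symm f.1).mpr f.2)⟩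
  invFun f := ⟨eb.symm ∘ f.1 ∘ ea,
    (Equiv.comp_surjective _ eb.symm).mpr ((Equiv.surjective_comp ea f.1).mpr f.2)⟩
  left_inv f := by ext x; simp
  right_inv f := by ext x; simp

/-- functions with range the complement of a point, vs surjections to the complement -/
noncomputable def rangeComplEquiv {n k : ℕ} (a : Fin (k + 1)) :
    {g : Fin n → Fin (k + 1) // Set.range g = {a}ᶜ} ≃
      {g : Fin n → {x : Fin (k + 1) // x ≠ a} // Surjective g} where
  toFun g := ⟨fun i => ⟨g.1 i, by
      intro h
      have h2 : g.1 i ∈ Set.range g.1 := Set.mem_range_self i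
      rw [g.2, h] at h2
      simp at h2⟩, by
    rintro ⟨x, hx⟩
    have : x ∈ Set.range g.1 := by rw [g.2]; simpa using hx
    obtain ⟨i, hi⟩ := this
    exact ⟨i, by simpa using hi⟩⟩
  invFun g := ⟨fun i => (g.1 i).1, by
    ext x
    constructor
    · rintro ⟨i, rfl⟩; exact (g.1 i).2
    · intro hx
      obtain ⟨i, hi⟩ := g.2 ⟨x, by simpa using hx⟩
      exact ⟨i, by simpa using congrArg Subtype.val hi⟩⟩
  left_inv g := rfl
  right_inv g := by ext i; rfl

/-- splitting off the value at 0 -/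
noncomputable def surjConsEquiv (n k : ℕ) :
    {f : Fin (n + 1) → Fin (k + 1) // Surjective f} ≃
      Σ a : Fin (k + 1), {g : Fin n → Fin (k + 1) // Surjective (Fin.cons a g)} where
  toFun f := ⟨f.1 0, Fin.tail f.1, by rw [Fin.cons_self_tail]; exact f.2⟩
  invFun ag := ⟨Fin.cons ag.1 ag.2.1, ag.2.2⟩
  left_inv f := Subtype.ext (Fin.cons_self_tail f.1)
  right_inv := fun ⟨a, g, h⟩ => by
    simp only [Fin.cons_zero]
    congr 1

lemma card_surjections : ∀ (n k : ℕ),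
    Fintype.card {f : Fin n → Fin k // Surjective f} = k.factorial * stirling2 n k
  | 0, 0 => by
      rw [Fintype.card_eq_one_iff.mpr ⟨⟨fun i => i.elim0, fun j => j.elim0⟩, by
        rintro ⟨f, hf⟩; ext i; exact i.elim0⟩]
      rfl
  | 0, k + 1 => by
      rw [Fintype.card_eq_zero_iff.mpr ⟨by
        rintro ⟨f, hf⟩
        obtain ⟨i, -⟩ := hf 0
        exact i.elim0⟩]
      simp [stirling2]
  | n + 1, 0 => by
      rw [Fintype.card_eq_zero_iff.mpr ⟨by rintro ⟨f, -⟩; exact (f 0).elim0⟩]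
      simp [stirling2]
  | n + 1, k + 1 => by
      classical
      have key : Fintype.card {f : Fin (n + 1) → Fin (k + 1) // Surjective f}
          = (k + 1) * (Fintype.card {f : Fin n → Fin k // Surjective f}
              + Fintype.card {f : Fin n → Fin (k + 1) // Surjective f}) := by
        rw [Fintype.card_congr (surjConsEquiv n k), Fintype.card_sigma]
        have e2 : ∀ a : Fin (k + 1),
            Fintype.card {g : Fin n → Fin (k + 1) // Surjective (Fin.cons a g)}
              = Fintype.card {f : Fin n → Fin k // Surjective f}
                + Fintype.card {f : Fin n → Fin (k + 1) // Surjective f} := by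
          intro a
          have hiff : ∀ g : Fin n → Fin (k + 1),
              Surjective (Fin.cons a g) ↔ (Surjective g ∨ Set.range g = {a}ᶜ) := by
            intro g
            constructor
            · intro h
              by_cases ha : a ∈ Set.range g
              · left
                intro j
                obtain ⟨i, hi⟩ := h j
                revert hi
                refine Fin.cases ?_ ?_ i
                · intro hi; rw [Fin.cons_zero] at hi; subst hi; exact ha
                · intro i hi; rw [Fin.cons_succ] at hi; exact ⟨i, hi⟩
              · right
                ext x
                simp only [Set.mem_compl_iff, Set.mem_singleton_iff]
                constructor
                · rintro ⟨i, rfl⟩ h2; exact ha ⟨i, h2⟩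
                · intro hx
                  obtain ⟨i, hi⟩ := h x
                  revert hi
                  refine Fin.cases ?_ ?_ i
                  · intro hi; rw [Fin.cons_zero] at hi
                    exact absurd hi (fun h2 => hx h2.symm)
                  · intro i hi; rw [Fin.cons_succ] at hi; exact ⟨i, hi⟩
            · rintro (h | h) j
              · obtain ⟨i, hi⟩ := h j
                exact ⟨i.succ, by simpa using hi⟩
              · by_cases hj : j = a
                · exact ⟨0, by simp [hj]⟩
                · have : j ∈ Set.range g := by rw [h]; simpa using hj
                  obtain ⟨i, hi⟩ := this
                  exact ⟨i.succ, by simpa using hi⟩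
          have hdisj : Disjoint (fun g : Fin n → Fin (k + 1) => Surjective g)
              (fun g => Set.range g = {a}ᶜ) := by
            rw [Pi.disjoint_iff]
            intro g
            rw [disjoint_iff]
            by_cases h : Set.range g = {a}ᶜ
            · have h2 : ¬ Surjective g := by
                intro hs
                have : a ∈ Set.range g := hs a
                rw [h] at this; simp at this
              simp [h2]
            · simp [h]
          have e3 : {g : Fin n → Fin (k + 1) // Surjective (Fin.cons a g)} ≃
              {g : Fin n → Fin (k + 1) // Surjective g} ⊕
                {g : Fin n → Fin (k + 1) // Set.range g = {a}ᶜ} :=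
            (Equiv.subtypeEquivRight hiff).trans (subtypeOrEquiv _ _ hdisj)
          rw [Fintype.card_congr e3, Fintype.card_sum, Nat.add_comm]
          congr 1
          rw [Fintype.card_congr ((rangeComplEquiv a).trans
            (surjEquiv (Equiv.refl _) (finSuccAboveEquiv a).symm))]
        rw [Finset.sum_congr rfl fun a _ => e2 a, Finset.sum_const, Finset.card_univ,
          Fintype.card_fin, smul_eq_mul]
      rw [key, card_surjections n k, card_surjections n (k + 1), stirling2,
        Nat.factorial_succ]
      ring

section aux
variable {nw L : ℕ}

lemma sym2_out_mk (e : Sym2 (Fin nw)) : s(e.out.1, e.out.2) = e := by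
  exact e.out_eq

lemma sym2_out_ne {e : Sym2 (Fin nw)} (h : ¬ e.IsDiag) : e.out.1 ≠ e.out.2 := by
  intro hh
  exact h (by rw [← sym2_out_mk e]; exact Sym2.mk_isDiag_iff.mpr hh)

/-- ordered pairs realizing an edge of `G`, vs edge × orientation -/
noncomputable def edgePairEquiv (G : Finset (Sym2 (Fin nw)))
    (hdiag : ∀ e ∈ G, ¬ e.IsDiag) :
    {p : Fin nw × Fin nw // p.1 ≠ p.2 ∧ s(p.1, p.2) ∈ G} ≃
      {e : Sym2 (Fin nw) // e ∈ G} × Bool where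
  toFun p := (⟨s(p.1.1, p.1.2), p.2.2⟩, decide (p.1 = (s(p.1.1, p.1.2)).out))
  invFun eb :=
    if hb : eb.2 then
      ⟨eb.1.1.out, sym2_out_ne (hdiag _ eb.1.2), by
        rw [sym2_out_mk]; exact eb.1.2⟩
    else
      ⟨eb.1.1.out.swap, (sym2_out_ne (hdiag _ eb.1.2)).symm, by
        show s(eb.1.1.out.2, eb.1.1.out.1) ∈ G
        rw [Sym2.eq_swap, sym2_out_mk]; exact eb.1.2⟩
  left_inv := by
    rintro ⟨⟨u, v⟩, hne, hmem⟩
    have hout : s((s(u,v)).out.1, (s(u,v)).out.2) = s(u, v) := sym2_out_mk _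
    rw [Sym2.eq_iff] at hout
    dsimp only
    rcases hout with ⟨h1, h2⟩ | ⟨h1, h2⟩
    · have hpair : (s(u,v)).out = (u, v) := Prod.ext h1 h2
      rw [dif_pos (by simp [hpair])]
      exact Subtype.ext hpair
    · have hpair : (s(u,v)).out = (v, u) := Prod.ext h1 h2
      rw [dif_neg (by
        simp only [decide_eq_true_eq, hpair]
        intro hc
        exact hne (congrArg Prod.fst hc))]
      exact Subtype.ext (by show (Quot.out s(u,v)).swap = (u, v); rw [hpair]; rfl)
  right_inv := by
    rintro ⟨⟨e, he⟩, b⟩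
    dsimp only
    cases b
    · rw [dif_neg (by simp)]
      have hedge : s(e.out.swap.1, e.out.swap.2) = e := by
        rw [show e.out.swap.1 = e.out.2 from rfl, show e.out.swap.2 = e.out.1 from rfl,
          Sym2.eq_swap, sym2_out_mk]
      refine Prod.ext (Subtype.ext hedge) ?_
      show decide (e.out.swap = (s(e.out.swap.1, e.out.swap.2)).out) = false
      rw [hedge]
      simp only [decide_eq_false_iff_not]
      intro hc
      exact sym2_out_ne (hdiag e he) (congrArg Prod.snd hc)
    · rw [dif_pos rfl]
      refine Prod.ext (Subtype.ext (sym2_out_mk e)) ?_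
      show decide (e.out = (s(e.out.1, e.out.2)).out) = true
      rw [sym2_out_mk e]
      simp

/-- pairs-valued functions surjective on the first coordinate -/
noncomputable def surjFstEquiv {ι X Y : Type*} :
    {f : ι → X × Y // Surjective fun i => (f i).1} ≃
      {g : ι → X // Surjective g} × (ι → Y) where
  toFun f := (⟨fun i => (f.1 i).1, f.2⟩, fun i => (f.1 i).2)
  invFun gb := ⟨fun i => (gb.1.1 i, gb.2 i), gb.1.2⟩
  left_inv _ := rfl
  right_inv _ := rfl

/-- reconstruct a sentence from its values on `A` and on `Aᶜ` -/
def recon (A : Finset (Fin L)) (u : {ℓ // ℓ ∈ A} → Fin nw) (c : {ℓ // ℓ ∈ Aᶜ} → Fin nw) :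
    Fin L → Fin nw :=
  fun ℓ => if h : ℓ ∈ A then u ⟨ℓ, h⟩ else c ⟨ℓ, Finset.mem_compl.mpr h⟩

lemma recon_pos {A : Finset (Fin L)} (u : {ℓ // ℓ ∈ A} → Fin nw) (c : {ℓ // ℓ ∈ Aᶜ} → Fin nw)
    {ℓ : Fin L} (h : ℓ ∈ A) : recon A u c ℓ = u ⟨ℓ, h⟩ := dif_pos h

lemma recon_neg {A : Finset (Fin L)} (u : {ℓ // ℓ ∈ A} → Fin nw) (c : {ℓ // ℓ ∈ Aᶜ} → Fin nw)
    {ℓ : Fin L} (h : ℓ ∉ A) : recon A u c ℓ = c ⟨ℓ, Finset.mem_compl.mpr h⟩ := dif_neg h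

/-- the per-fiber decomposition -/
noncomputable def fiberEquiv (nw L : ℕ) (G : Finset (Sym2 (Fin nw))) (A : Finset (Fin L)) :
    {xy : (Fin L → Fin nw) × (Fin L → Fin nw) //
        zeta nw L xy.1 xy.2 = G ∧ Finset.univ.filter (fun ℓ => xy.1 ℓ ≠ xy.2 ℓ) = A} ≃
      {f : {ℓ // ℓ ∈ A} → {p : Fin nw × Fin nw // p.1 ≠ p.2 ∧ s(p.1, p.2) ∈ G} //
          Surjective fun a => (⟨s((f a).1.1, (f a).1.2), (f a).2.2⟩ : {e // e ∈ G})}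
        × ({ℓ // ℓ ∈ Aᶜ} → Fin nw) where
  toFun xy := ⟨⟨fun a => ⟨(xy.1.1 a.1, xy.1.2 a.1), by
      have ha : (a : Fin L) ∈ Finset.univ.filter (fun ℓ => xy.1.1 ℓ ≠ xy.1.2 ℓ) := by
        rw [xy.2.2]; exact a.2
      refine ⟨(Finset.mem_filter.mp ha).2, ?_⟩
      have h2 : s(xy.1.1 a.1, xy.1.2 a.1) ∈ zeta nw L xy.1.1 xy.1.2 :=
        Finset.mem_image_of_mem _ ha
      rw [xy.2.1] at h2
      exact h2⟩, by
      rintro ⟨e, he⟩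
      have he' : e ∈ zeta nw L xy.1.1 xy.1.2 := by rw [xy.2.1]; exact he
      obtain ⟨ℓ, hℓ, hs⟩ := Finset.mem_image.mp he'
      exact ⟨⟨ℓ, by rw [← xy.2.2]; exact hℓ⟩, Subtype.ext hs⟩⟩,
    fun a => xy.1.1 a.1⟩
  invFun fc := ⟨(recon A (fun a => (fc.1.1 a).1.1) fc.2, recon A (fun a => (fc.1.1 a).1.2) fc.2), by
    constructor
    · ext e
      rw [zeta, Finset.mem_image]
      constructor
      · rintro ⟨ℓ, hℓ, rfl⟩
        have hne := (Finset.mem_filter.mp hℓ).2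
        dsimp only at hne ⊢
        by_cases h : ℓ ∈ A
        · rw [recon_pos _ _ h, recon_pos _ _ h]
          exact (fc.1.1 ⟨ℓ, h⟩).2.2
        · rw [recon_neg _ _ h, recon_neg _ _ h] at hne
          exact absurd rfl hne
      · intro he
        obtain ⟨a, ha⟩ := fc.1.2 ⟨e, he⟩
        have ha' : s((fc.1.1 a).1.1, (fc.1.1 a).1.2) = e := congrArg Subtype.val ha
        refine ⟨a.1, ?_, ?_⟩
        · rw [Finset.mem_filter]
          refine ⟨Finset.mem_univ _, ?_⟩
          dsimp only
          rw [recon_pos _ _ a.2, recon_pos _ _ a.2]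
          exact (fc.1.1 a).2.1
        · dsimp only
          rw [recon_pos _ _ a.2, recon_pos _ _ a.2]
          exact ha'
    · ext ℓ
      simp only [Finset.mem_filter, Finset.mem_univ, true_and]
      by_cases h : ℓ ∈ A
      · rw [recon_pos _ _ h, recon_pos _ _ h]
        exact ⟨fun _ => h, fun _ => (fc.1.1 ⟨ℓ, h⟩).2.1⟩
      · rw [recon_neg _ _ h, recon_neg _ _ h]
        exact ⟨fun hc => absurd rfl hc, fun hc => absurd hc h⟩⟩
  left_inv := by
    rintro ⟨⟨x, y⟩, hG, hA⟩
    apply Subtype.ext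
    dsimp only
    refine Prod.ext ?_ ?_ <;> funext ℓ <;> dsimp only <;> by_cases h : ℓ ∈ A
    · rw [recon_pos _ _ h]
    · rw [recon_neg _ _ h]
    · rw [recon_pos _ _ h]
    · rw [recon_neg _ _ h]
      show x ℓ = y ℓ
      by_contra hne
      exact h (by rw [← hA]; exact Finset.mem_filter.mpr ⟨Finset.mem_univ _, hne⟩)
  right_inv := by
    rintro ⟨f, c⟩
    refine Prod.ext (Subtype.ext (funext fun a => Subtype.ext ?_)) (funext fun a => ?_)
    · dsimp only
      rw [recon_pos _ _ a.2, recon_pos _ _ a.2]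
    · dsimp only
      rw [recon_neg _ _ (Finset.mem_compl.mp a.2)]

open scoped Classical in
/-- transporting the surjectivity condition through `edgePairEquiv` -/
noncomputable def surjCondEquiv (ι : Type*) (G : Finset (Sym2 (Fin nw)))
    (hdiag : ∀ e ∈ G, ¬ e.IsDiag) :
    {f : ι → {p : Fin nw × Fin nw // p.1 ≠ p.2 ∧ s(p.1, p.2) ∈ G} //
        Surjective fun a => (⟨s((f a).1.1, (f a).1.2), (f a).2.2⟩ : {e // e ∈ G})} ≃
      ({g : ι → {e // e ∈ G} // Surjective g} × (ι → Bool)) :=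
  Equiv.trans
    { toFun := fun f => ⟨fun i => edgePairEquiv G hdiag (f.1 i), f.2⟩
      invFun := fun h => ⟨fun i => (edgePairEquiv G hdiag).symm (h.1 i), by
        intro b
        obtain ⟨i, hi⟩ := h.2 b
        refine ⟨i, ?_⟩
        have : (edgePairEquiv G hdiag ((edgePairEquiv G hdiag).symm (h.1 i))).1 = b := by
          rw [Equiv.apply_symm_apply]; exact hi
        exact this⟩
      left_inv := fun f => Subtype.ext (funext fun i => (edgePairEquiv G hdiag).symm_apply_apply _)
      right_inv := fun h => Subtype.ext (funext fun i => (edgePairEquiv G hdiag).apply_symm_apply _) }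
    surjFstEquiv

lemma filter_card_eq_nat_card {α : Type*} [Fintype α] (p : α → Prop) [DecidablePred p] :
    (Finset.univ.filter p).card = Nat.card {x // p x} := by
  rw [Nat.card_eq_fintype_card, Fintype.card_subtype]

lemma card_surjG (ι : Type*) [Finite ι] (G : Finset (Sym2 (Fin nw)))
    (hdiag : ∀ e ∈ G, ¬ e.IsDiag) :
    Nat.card {f : ι → {p : Fin nw × Fin nw // p.1 ≠ p.2 ∧ s(p.1, p.2) ∈ G} //
        Surjective fun a => (⟨s((f a).1.1, (f a).1.2), (f a).2.2⟩ : {e // e ∈ G})}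
      = (G.card.factorial * stirling2 (Nat.card ι) G.card) * 2 ^ (Nat.card ι) := by
  classical
  have : Fintype ι := Fintype.ofFinite ι
  rw [Nat.card_congr (surjCondEquiv ι G hdiag), Nat.card_prod]
  congr 1
  · rw [Nat.card_congr (surjEquiv (Fintype.equivFin ι) (Fintype.equivFin {e // e ∈ G}))]
    rw [Nat.card_eq_fintype_card, card_surjections, Fintype.card_coe,
      Fintype.card_eq_nat_card]
  · rw [Nat.card_fun]
    simp [Nat.card_eq_fintype_card]

lemma card_fiber (nw L : ℕ) (G : Finset (Sym2 (Fin nw)))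
    (hdiag : ∀ e ∈ G, ¬ e.IsDiag) (A : Finset (Fin L)) :
    (Finset.univ.filter (fun xy : (Fin L → Fin nw) × (Fin L → Fin nw) =>
        zeta nw L xy.1 xy.2 = G ∧ Finset.univ.filter (fun ℓ => xy.1 ℓ ≠ xy.2 ℓ) = A)).card
      = G.card.factorial * stirling2 A.card G.card * 2 ^ A.card * nw ^ (L - A.card) := by
  classical
  rw [filter_card_eq_nat_card, Nat.card_congr (fiberEquiv nw L G A), Nat.card_prod,
    card_surjG _ G hdiag, Nat.card_eq_finsetCard, Nat.card_fun,
    Nat.card_eq_finsetCard, Finset.card_compl, Fintype.card_fin,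
    Nat.card_eq_fintype_card (α := Fin nw), Fintype.card_fin]

end aux

/-- Number of pairs of sentences mapped by `ζ` to a given graph with `m ≤ L` edges. -/
theorem card_zeta_preimage (nw L m : ℕ) (G : Finset (Sym2 (Fin nw)))
    (hdiag : ∀ e ∈ G, ¬ e.IsDiag) (hcard : G.card = m) (hm : m ≤ L) :
    (Finset.univ.filter
        (fun xy : (Fin L → Fin nw) × (Fin L → Fin nw) => zeta nw L xy.1 xy.2 = G)).card
      = Nat.factorial m * ∑ α ∈ Finset.Icc m L,
          Nat.choose L α * stirling2 α m * 2 ^ α * nw ^ (L - α) := by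
  classical
  subst hcard
  rw [Finset.card_eq_sum_card_fiberwise
    (f := fun xy : (Fin L → Fin nw) × (Fin L → Fin nw) =>
      Finset.univ.filter fun ℓ => xy.1 ℓ ≠ xy.2 ℓ)
    (t := (Finset.univ : Finset (Fin L)).powerset)
    (fun x _ => Finset.mem_powerset.mpr (Finset.subset_univ _))]
  have hterm : ∀ A ∈ (Finset.univ : Finset (Fin L)).powerset,
      ((Finset.univ.filter (fun xy : (Fin L → Fin nw) × (Fin L → Fin nw) =>
            zeta nw L xy.1 xy.2 = G)).filter
          (fun xy => (Finset.univ.filter fun ℓ => xy.1 ℓ ≠ xy.2 ℓ) = A)).card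
        = (fun α => G.card.factorial * stirling2 α G.card * 2 ^ α * nw ^ (L - α)) A.card := by
    intro A _
    rw [Finset.filter_filter]
    exact card_fiber nw L G hdiag A
  rw [Finset.sum_congr rfl hterm,
    Finset.sum_powerset_apply_card
      (f := fun α => G.card.factorial * stirling2 α G.card * 2 ^ α * nw ^ (L - α)),
    Finset.card_univ, Fintype.card_fin, Finset.mul_sum]
  have hsub : Finset.Icc G.card L ⊆ Finset.range (L + 1) := by
    intro j hj
    rw [Finset.mem_range]
    exact Nat.lt_succ_of_le (Finset.mem_Icc.mp hj).2
  rw [Finset.sum_subset hsub (fun j hj hnot => ?_)]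
  · refine Finset.sum_congr rfl fun j _ => ?_
    rw [smul_eq_mul]
    ring
  · have hjL : j ≤ L := Nat.lt_succ_iff.mp (Finset.mem_range.mp hj)
    have hjm : j < G.card := by
      by_contra hc
      exact hnot (Finset.mem_Icc.mpr ⟨Nat.le_of_not_lt hc, hjL⟩)
    rw [stirling2_eq_zero hjm]
    ring
end

section
/- Let G be a graph on V = {1,...,n_w} with exactly k_i connected components of size i for each 1 ≤ i ≤ L+1. Let Φ be the set of maps φ : V → {1,...,n_c} with all fibers of size s_c = n_w/n_c. Then the number of φ ∈ Φ that do not sever any edge of G (i.e. φ(v) = φ(v') for every edge {v,v'} of G) equals ∑_{A ∈ A_k} ∏_{i=1}^{L+1} multinomial(k_i; A_{i,1},...,A_{i,n_c}), where A_k is the set of matrices A ∈ N^{(L+1)×n_c} with ∑_j A_{ij} = k_i for all i and ∑_i i·A_{ij} = s_c for all j. -/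
lemma subtype_filter_card {α : Type*} [Fintype α] (p q : α → Prop)
    [DecidablePred p] [DecidablePred q] (h : ∀ a, q a → p a) :
    (Finset.univ.filter (fun a : {a // p a} => q a.1)).card
      = (Finset.univ.filter (fun a => q a)).card := by
  classical
  rw [← Fintype.card_subtype, ← Fintype.card_subtype]
  exact Fintype.card_congr
    ((Equiv.subtypeSubtypeEquivSubtypeInter p q).trans
      (Equiv.subtypeEquivRight fun a => ⟨And.right, fun hq => ⟨h a hq, hq⟩⟩))

lemma card_fiber_funs {β : Type} [Fintype β] [DecidableEq β] (t : Finset β) :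
    ∀ (α : Type) [Fintype α] [DecidableEq α] (m : β → ℕ),
      (∑ b ∈ t, m b = Fintype.card α) →
      Nat.card {f : α → β // (∀ a, f a ∈ t) ∧
        ∀ b ∈ t, (Finset.univ.filter (fun a => f a = b)).card = m b}
        = Nat.multinomial t m := by
  induction t using Finset.cons_induction with
  | empty =>
    intro α _ _ m hm
    simp only [Finset.sum_empty] at hm
    haveI : IsEmpty α := Fintype.card_eq_zero_iff.mp hm.symm
    haveI : Unique {f : α → β // (∀ a, f a ∈ (∅ : Finset β)) ∧
        ∀ b ∈ (∅ : Finset β), (Finset.univ.filter (fun a => f a = b)).card = m b} :=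
      ⟨⟨⟨fun a => isEmptyElim a, fun a => isEmptyElim a, fun b hb => by simp at hb⟩⟩,
        fun f => Subtype.ext (funext fun a => isEmptyElim a)⟩
    rw [Nat.card_unique, Nat.multinomial_empty]
  | cons b t hb ih =>
    intro α _ _ m hm
    classical
    rw [Finset.sum_cons] at hm
    set P : (α → β) → Prop := fun f => (∀ a, f a ∈ Finset.cons b t hb) ∧
        ∀ b' ∈ Finset.cons b t hb,
          (Finset.univ.filter (fun a => f a = b')).card = m b' with hP
    have hNat : Nat.card {f : α → β // P f} = (Finset.univ.filter P).card := by
      rw [Nat.card_eq_fintype_card, Fintype.card_subtype]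
    rw [hNat]
    have hmaps : ∀ f ∈ Finset.univ.filter P,
        Finset.univ.filter (fun a => f a = b) ∈
          Finset.powersetCard (m b) (Finset.univ : Finset α) := by
      intro f hf
      rw [Finset.mem_filter] at hf
      rw [Finset.mem_powersetCard]
      exact ⟨Finset.filter_subset _ _, hf.2.2 b (Finset.mem_cons_self _ _)⟩
    rw [Finset.card_eq_sum_card_fiberwise hmaps]
    have hbne : ∀ b' ∈ t, b' ≠ b := fun b' hb' h => hb (h ▸ hb')
    have key : ∀ F ∈ Finset.powersetCard (m b) (Finset.univ : Finset α),
        ((Finset.univ.filter P).filter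
            (fun f => Finset.univ.filter (fun a => f a = b) = F)).card
          = Nat.multinomial t m := by
      intro F hF
      obtain ⟨-, hFc⟩ := Finset.mem_powersetCard.mp hF
      have hcard' : ∑ b' ∈ t, m b' = Fintype.card {a : α // a ∉ F} := by
        have h1 : Fintype.card {a : α // a ∉ F} =
            Fintype.card α - Fintype.card {a : α // a ∈ F} :=
          Fintype.card_subtype_compl _
        rw [h1, Fintype.card_coe, hFc]
        omega
      rw [Finset.filter_filter, ← Fintype.card_subtype, ← Nat.card_eq_fintype_card,
        ← ih {a : α // a ∉ F} m hcard']
      apply Nat.card_congr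
      refine ⟨fun f => ⟨fun a => f.1 a.1, ?_, ?_⟩, fun g => ⟨fun a =>
        if h : a ∈ F then b else g.1 ⟨a, h⟩, ?_⟩, ?_, ?_⟩
      · -- values in t
        obtain ⟨f, ⟨hf1, hf2⟩, hfib⟩ := f
        have hFiff : ∀ x, x ∈ F ↔ f x = b := by
          intro x; rw [← hfib]; simp
        rintro ⟨a, ha⟩
        rcases Finset.mem_cons.mp (hf1 a) with h | h
        · exact absurd ((hFiff a).mpr h) ha
        · exact h
      · -- fibers over t
        obtain ⟨f, ⟨hf1, hf2⟩, hfib⟩ := f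
        have hFiff : ∀ x, x ∈ F ↔ f x = b := by
          intro x; rw [← hfib]; simp
        intro b' hb'
        have h := subtype_filter_card (fun a : α => a ∉ F) (fun a => f a = b')
          (fun a ha hmem => hbne b' hb' (by rw [← ha]; exact (hFiff a).mp hmem))
        dsimp only at h ⊢
        rw [h]
        exact hf2 b' (Finset.mem_cons_of_mem hb')
      · -- invFun produces a valid f
        obtain ⟨g, hg1, hg2⟩ := g
        dsimp only
        have hfib : Finset.univ.filter
            (fun a => (if h : a ∈ F then b else g ⟨a, h⟩) = b) = F := by
          ext a
          simp only [Finset.mem_filter, Finset.mem_univ, true_and]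
          constructor
          · intro h
            by_contra hc
            rw [dif_neg hc] at h
            exact hb (h ▸ hg1 ⟨a, hc⟩)
          · intro h
            rw [dif_pos h]
        refine ⟨⟨fun a => ?_, fun b' hb' => ?_⟩, hfib⟩
        · show (if h : a ∈ F then b else g ⟨a, h⟩) ∈ Finset.cons b t hb
          by_cases h : a ∈ F
          · rw [dif_pos h]; exact Finset.mem_cons_self _ _
          · rw [dif_neg h]; exact Finset.mem_cons_of_mem (hg1 ⟨a, h⟩)
        · rcases Finset.mem_cons.mp hb' with rfl | hb'
          · rw [hfib, hFc]
          · have h := subtype_filter_card (fun a : α => a ∉ F)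
              (fun a => (if h : a ∈ F then b else g ⟨a, h⟩) = b')
              (fun a ha => by
                intro hmem
                have ha' : (if h : a ∈ F then b else g ⟨a, h⟩) = b' := ha
                rw [dif_pos hmem] at ha'
                exact absurd ha'.symm (hbne b' hb'))
            rw [← h, ← hg2 b' hb']
            congr 1
            apply Finset.filter_congr
            rintro ⟨a, ha⟩ -
            rw [dif_neg ha]
      · -- left inverse
        rintro ⟨f, ⟨hf1, hf2⟩, hfib⟩
        have hFiff : ∀ x, x ∈ F ↔ f x = b := by
          intro x; rw [← hfib]; simp
        apply Subtype.ext
        funext a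
        dsimp only
        by_cases h : a ∈ F
        · rw [dif_pos h]
          exact ((hFiff a).mp h).symm
        · rw [dif_neg h]
      · -- right inverse
        rintro ⟨g, hg1, hg2⟩
        apply Subtype.ext
        funext a
        rcases a with ⟨a, ha⟩
        dsimp only
        rw [dif_neg ha]
    rw [Finset.sum_congr rfl key, Finset.sum_const, smul_eq_mul,
      Finset.card_powersetCard, Finset.card_univ, Nat.multinomial_cons, ← hm]

lemma card_partitioned_funs {α β ι : Type} [Fintype α] [DecidableEq α]
    [Fintype ι] [DecidableEq ι] [Fintype β] [DecidableEq β]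
    (idx : α → ι) (A : ι → β → ℕ)
    (hA : ∀ i, ∑ b, A i b = (Finset.univ.filter (fun a => idx a = i)).card) :
    Nat.card {ψ : α → β // ∀ i b,
        (Finset.univ.filter (fun a => idx a = i ∧ ψ a = b)).card = A i b}
      = ∏ i, Nat.multinomial Finset.univ (A i) := by
  classical
  have hsplit : ∀ (ψ : α → β) (i : ι) (b : β),
      (Finset.univ.filter (fun a => idx a = i ∧ ψ a = b)).card
        = (Finset.univ.filter (fun a : {a // idx a = i} => ψ a.1 = b)).card := by
    intro ψ i b
    rw [← subtype_filter_card (fun a => idx a = i)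
      (fun a => idx a = i ∧ ψ a = b) (fun a => And.left)]
    congr 1
    apply Finset.filter_congr
    rintro ⟨a, ha⟩ -
    simp [ha]
  have h1 : Nat.card {ψ : α → β // ∀ i b,
        (Finset.univ.filter (fun a => idx a = i ∧ ψ a = b)).card = A i b}
      = Nat.card (∀ i, {g : {a : α // idx a = i} → β //
          ∀ b, (Finset.univ.filter (fun a => g a = b)).card = A i b}) := by
    apply Nat.card_congr
    refine (Equiv.subtypeEquiv (⟨fun ψ i a => ψ a.1, fun g a => g (idx a) ⟨a, rfl⟩,
      fun ψ => funext fun a => rfl,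
      fun g => funext fun i => funext fun a => by
        obtain ⟨a, rfl⟩ := a; rfl⟩ : (α → β) ≃ ∀ i, ({a : α // idx a = i} → β))
      ?_).trans (Equiv.subtypePiEquivPi)
    intro ψ
    constructor
    · intro hψ i b
      exact (hsplit ψ i b).symm.trans (hψ i b)
    · intro hg i b
      exact (hsplit ψ i b).trans (hg i b)
  rw [h1, Nat.card_pi]
  apply Finset.prod_congr rfl
  intro i _
  rw [← card_fiber_funs (Finset.univ : Finset β) {a : α // idx a = i} (A i)
    (by rw [Fintype.card_subtype]; simpa using hA i)]
  apply Nat.card_congr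
  exact Equiv.subtypeEquivRight fun g =>
    ⟨fun hg => ⟨fun a => Finset.mem_univ _, fun b _ => hg b⟩,
      fun hg b => hg.2 b (Finset.mem_univ _)⟩

/-- Counting the cut-free equipartitions of a graph with a prescribed
connected component profile. -/
theorem card_cutfree_equipartitions (nw nc s L : ℕ) (h : nw = nc * s)
    (G : SimpleGraph (Fin nw)) (k : Fin (L + 1) → ℕ)
    (hk : ∀ i : Fin (L + 1),
      {c : G.ConnectedComponent | c.supp.ncard = (i : ℕ) + 1}.ncard = k i)
    (hcover : ∀ c : G.ConnectedComponent, c.supp.ncard ≤ L + 1) :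
    {φ : Fin nw → Fin nc |
        (∀ c : Fin nc, (Finset.univ.filter (fun v => φ v = c)).card = s) ∧
        ∀ v v' : Fin nw, G.Adj v v' → φ v = φ v'}.ncard
      = ∑ᶠ A ∈ {A : Fin (L + 1) → Fin nc → ℕ |
            (∀ i, ∑ j : Fin nc, A i j = k i) ∧
            (∀ j, ∑ i : Fin (L + 1), ((i : ℕ) + 1) * A i j = s)},
          ∏ i : Fin (L + 1), Nat.multinomial Finset.univ (A i) := by
  classical
  haveI : Fintype G.ConnectedComponent := Fintype.ofFinite _
  set idx : G.ConnectedComponent → Fin (L + 1) :=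
    fun c => ⟨min (c.supp.ncard - 1) L, Nat.lt_succ_of_le (min_le_right _ _)⟩ with hidx
  -- basic facts about component sizes
  have h1pos : ∀ c : G.ConnectedComponent, 1 ≤ c.supp.ncard := by
    intro c
    refine c.ind fun v => ?_
    have hv : v ∈ (G.connectedComponentMk v).supp :=
      (SimpleGraph.ConnectedComponent.mem_supp_iff _ _).mpr rfl
    have := Set.ncard_pos (s := (G.connectedComponentMk v).supp) (Set.toFinite _)
    exact this.mpr ⟨v, hv⟩
  have hidx_iff : ∀ (c : G.ConnectedComponent) (i : Fin (L + 1)),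
      idx c = i ↔ c.supp.ncard = (i : ℕ) + 1 := by
    intro c i
    have h1 := h1pos c
    have h2 := hcover c
    have h3 := i.isLt
    rw [hidx, Fin.ext_iff]
    simp only
    omega
  have hsupp_card : ∀ c : G.ConnectedComponent,
      (Finset.univ.filter (fun v => G.connectedComponentMk v = c)).card
        = c.supp.ncard := by
    intro c
    rw [← Set.ncard_coe_finset]
    congr 1
    ext v
    simp [SimpleGraph.ConnectedComponent.mem_supp_iff]
  have hclass : ∀ i : Fin (L + 1),
      (Finset.univ.filter (fun c : G.ConnectedComponent => idx c = i)).card = k i := by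
    intro i
    rw [← hk i, ← Set.ncard_coe_finset]
    congr 1
    ext c
    simp only [Finset.coe_filter, Finset.mem_univ, true_and, Set.mem_setOf_eq]
    exact hidx_iff c i
  -- the fiber size of φ = ψ ∘ mk over j is the total size of components colored j
  have hfiber : ∀ (ψ : G.ConnectedComponent → Fin nc) (j : Fin nc),
      (Finset.univ.filter (fun v => ψ (G.connectedComponentMk v) = j)).card
        = ∑ c ∈ Finset.univ.filter (fun c : G.ConnectedComponent => ψ c = j),
            c.supp.ncard := by
    intro ψ j
    rw [Finset.card_eq_sum_card_fiberwise
      (f := fun v => G.connectedComponentMk v) (t := Finset.univ)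
      (fun v _ => Finset.mem_univ _)]
    rw [Finset.sum_filter]
    apply Finset.sum_congr rfl
    intro c _
    by_cases hc : ψ c = j
    · rw [if_pos hc, ← hsupp_card c]
      congr 1
      ext v
      simp only [Finset.mem_filter, Finset.mem_univ, true_and]
      constructor
      · exact And.right
      · intro hv; exact ⟨hv ▸ hc, hv⟩
    · rw [if_neg hc]
      rw [Finset.card_eq_zero]
      ext v
      simp only [Finset.mem_filter, Finset.mem_univ, true_and, Finset.notMem_empty,
        iff_false, not_and]
      intro hv hmk
      exact hc (hmk ▸ hv)
  -- sum over a color class grouped by component size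
  have hsum : ∀ (ψ : G.ConnectedComponent → Fin nc) (j : Fin nc),
      ∑ c ∈ Finset.univ.filter (fun c : G.ConnectedComponent => ψ c = j),
          c.supp.ncard
        = ∑ i : Fin (L + 1), ((i : ℕ) + 1) *
            (Finset.univ.filter
              (fun c : G.ConnectedComponent => idx c = i ∧ ψ c = j)).card := by
    intro ψ j
    rw [← Finset.sum_fiberwise_of_maps_to
      (g := idx) (t := Finset.univ) (fun c _ => Finset.mem_univ _)
      (f := fun c => c.supp.ncard)]
    apply Finset.sum_congr rfl
    intro i _
    have hfe : (Finset.univ.filter (fun c : G.ConnectedComponent => ψ c = j)).filter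
          (fun c => idx c = i)
        = Finset.univ.filter (fun c : G.ConnectedComponent => idx c = i ∧ ψ c = j) := by
      ext c
      simp only [Finset.mem_filter, Finset.mem_univ, true_and]
      tauto
    rw [hfe]
    rw [Finset.sum_congr rfl (fun c hc => (hidx_iff c i).mp (Finset.mem_filter.mp hc).2.1)]
    rw [Finset.sum_const, smul_eq_mul, mul_comm]
  -- Step A : reduce to counting colorings of components
  set ΨSet : Set (G.ConnectedComponent → Fin nc) :=
    {ψ | ∀ j, ∑ c ∈ Finset.univ.filter
        (fun c : G.ConnectedComponent => ψ c = j), c.supp.ncard = s} with hΨSet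
  have himage : {φ : Fin nw → Fin nc |
        (∀ c : Fin nc, (Finset.univ.filter (fun v => φ v = c)).card = s) ∧
        ∀ v v' : Fin nw, G.Adj v v' → φ v = φ v'}
      = (fun ψ => ψ ∘ G.connectedComponentMk) '' ΨSet := by
    ext φ
    simp only [Set.mem_setOf_eq, Set.mem_image, hΨSet]
    constructor
    · rintro ⟨hcard, hadj⟩
      have walkeq : ∀ (v w : Fin nw) (p : G.Walk v w), φ v = φ w := by
        intro v w p
        induction p with
        | nil => rfl
        | cons hvw q ih => exact (hadj _ _ hvw).trans ih
      refine ⟨SimpleGraph.ConnectedComponent.lift φ (fun v w p _ => walkeq v w p),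
        ?_, ?_⟩
      · intro j
        rw [← hfiber _ j]
        rw [← hcard j]
        congr 1
      · funext v
        rfl
    · rintro ⟨ψ, hψ, rfl⟩
      refine ⟨fun j => ?_, fun v v' hadj => ?_⟩
      · show (Finset.univ.filter
            (fun v => ψ (G.connectedComponentMk v) = j)).card = s
        rw [hfiber ψ j, hψ j]
      · show ψ (G.connectedComponentMk v) = ψ (G.connectedComponentMk v')
        rw [SimpleGraph.ConnectedComponent.connectedComponentMk_eq_of_adj hadj]
  have hinj : Function.Injective
      (fun ψ : G.ConnectedComponent → Fin nc => ψ ∘ G.connectedComponentMk) := by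
    intro ψ ψ' hψ
    funext c
    refine c.ind fun v => ?_
    exact congrFun hψ v
  rw [himage, Set.ncard_image_of_injective _ hinj]
  -- Step B : count colorings by their profile matrix
  set Amap : (G.ConnectedComponent → Fin nc) → Fin (L + 1) → Fin nc → ℕ :=
    fun ψ i j => (Finset.univ.filter
      (fun c : G.ConnectedComponent => idx c = i ∧ ψ c = j)).card with hAmap
  have hrow : ∀ (ψ : G.ConnectedComponent → Fin nc) (i : Fin (L + 1)),
      ∑ j, Amap ψ i j = k i := by
    intro ψ i
    rw [← hclass i]
    rw [Finset.card_eq_sum_card_fiberwise (f := ψ) (t := Finset.univ)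
      (fun c _ => Finset.mem_univ _)]
    apply Finset.sum_congr rfl
    intro j _
    simp only [hAmap, Finset.filter_filter]
  set ΨF : Finset (G.ConnectedComponent → Fin nc) :=
    Finset.univ.filter (fun ψ => ψ ∈ ΨSet) with hΨF
  have hΨcoe : ΨSet = ↑ΨF := by
    ext ψ; simp [hΨF]
  have hpsi_iff : ∀ ψ : G.ConnectedComponent → Fin nc,
      ψ ∈ ΨF ↔ ∀ j, ∑ i : Fin (L + 1), ((i : ℕ) + 1) * Amap ψ i j = s := by
    intro ψ
    rw [hΨF, Finset.mem_filter]
    simp only [Finset.mem_univ, true_and, hΨSet, Set.mem_setOf_eq]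
    constructor
    · intro hψ j; rw [← hsum ψ j]; exact hψ j
    · intro hψ j; rw [hsum ψ j]; exact hψ j
  have hcount : ∀ A : Fin (L + 1) → Fin nc → ℕ, (∀ i, ∑ j, A i j = k i) →
      Nat.card {ψ : G.ConnectedComponent → Fin nc // ∀ i j,
          (Finset.univ.filter
            (fun c : G.ConnectedComponent => idx c = i ∧ ψ c = j)).card = A i j}
        = ∏ i, Nat.multinomial Finset.univ (A i) := by
    intro A hA
    exact card_partitioned_funs idx A (fun i => by rw [hA i, hclass i])
  set 𝒜F : Finset (Fin (L + 1) → Fin nc → ℕ) := ΨF.image Amap with h𝒜F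
  have h𝒜 : {A : Fin (L + 1) → Fin nc → ℕ |
        (∀ i, ∑ j : Fin nc, A i j = k i) ∧
        (∀ j, ∑ i : Fin (L + 1), ((i : ℕ) + 1) * A i j = s)} = ↑𝒜F := by
    ext A
    simp only [Set.mem_setOf_eq, h𝒜F, Finset.coe_image, Set.mem_image, Finset.mem_coe]
    constructor
    · rintro ⟨hA1, hA2⟩
      have hpos : 0 < Nat.card {ψ : G.ConnectedComponent → Fin nc // ∀ i j,
          (Finset.univ.filter
            (fun c : G.ConnectedComponent => idx c = i ∧ ψ c = j)).card = A i j} := by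
        rw [hcount A hA1]
        exact Finset.prod_pos fun i _ => Nat.multinomial_pos _ _
      obtain ⟨⟨ψ, hψ⟩⟩ := (Nat.card_pos_iff.mp hpos).1
      have hAmapψ : Amap ψ = A := by
        funext i j; exact hψ i j
      refine ⟨ψ, ?_, hAmapψ⟩
      rw [hpsi_iff ψ]
      intro j
      rw [hAmapψ]
      exact hA2 j
    · rintro ⟨ψ, hψ, rfl⟩
      exact ⟨hrow ψ, (hpsi_iff ψ).mp hψ⟩
  rw [h𝒜, finsum_mem_coe_finset, hΨcoe, Set.ncard_coe_finset]
  rw [Finset.card_eq_sum_card_fiberwise (f := Amap) (t := 𝒜F)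
    (fun ψ hψ => Finset.mem_image_of_mem _ hψ)]
  apply Finset.sum_congr rfl
  intro A hA
  obtain ⟨ψ₀, hψ₀, hAψ₀⟩ := Finset.mem_image.mp hA
  have hcol : ∀ j, ∑ i : Fin (L + 1), ((i : ℕ) + 1) * A i j = s := by
    intro j
    rw [← hAψ₀]
    exact (hpsi_iff ψ₀).mp hψ₀ j
  have hfe : ΨF.filter (fun ψ => Amap ψ = A)
      = Finset.univ.filter (fun ψ => Amap ψ = A) := by
    ext ψ
    simp only [Finset.mem_filter, Finset.mem_univ, true_and, and_iff_right_iff_imp]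
    intro hψA
    rw [hpsi_iff ψ]
    intro j
    rw [hψA]
    exact hcol j
  rw [hfe, ← Fintype.card_subtype, ← Nat.card_eq_fintype_card]
  rw [← hcount A (fun i => by rw [← hAψ₀]; exact hrow ψ₀ i)]
  apply Nat.card_congr
  apply Equiv.subtypeEquivRight
  intro ψ
  constructor
  · intro hψ i j
    rw [show (Finset.univ.filter
        (fun c : G.ConnectedComponent => idx c = i ∧ ψ c = j)).card = Amap ψ i j from rfl,
      hψ]
  · intro hψ
    funext i j
    exact hψ i j
end

section
/- Let K* : X × X → R be symmetric with every row K*(x,·) a probability distribution on the finite set X, and suppose K* is constant on each cell Ω_k of a finite partition {Ω_k}_{k ∈ S} of X × X, taking value f(k)/|X| on Ω_k. Then for any subset S' ⊆ S and any t ∈ N, (1/|X|)·∑_{x ∈ X} H_t(K*(x,·)) ≤ (1 - ∑_{k ∈ S'} (|Ω_k|/|X|^2)·f(k)) + (1/(t+1))·max_{k ∈ S'} f(k). -/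
/-- The `t`-th permuted moment of a vector indexed by a finite type `X`. -/
noncomputable def pmomX (X : Type) [Fintype X] [DecidableEq X] (t : ℕ) (p : X → ℝ) : ℝ :=
  Finset.univ.sup' ⟨(Fintype.equivFin X).symm, Finset.mem_univ _⟩
    (fun e : Fin (Fintype.card X) ≃ X =>
      ∑ i : Fin (Fintype.card X), ((i : ℝ) / (Fintype.card X)) ^ t * p (e i))

open Finset

lemma step_pow (n t : ℕ) : n ^ (t + 1) + (t + 1) * n ^ t ≤ (n + 1) ^ (t + 1) := by
  induction t with
  | zero => simp [pow_succ]
  | succ t ih =>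
    have h1 : (n + 1) ^ (t + 1 + 1) = (n + 1) * (n + 1) ^ (t + 1) := by ring
    have h2 : (n + 1) * (n ^ (t + 1) + (t + 1) * n ^ t) ≤ (n + 1) * (n + 1) ^ (t + 1) :=
      Nat.mul_le_mul_left _ ih
    have key : (n + 1) * (n ^ (t + 1) + (t + 1) * n ^ t)
        = n ^ (t + 1 + 1) + (t + 1 + 1) * n ^ (t + 1) + (t + 1) * n ^ t := by ring
    calc n ^ (t + 1 + 1) + (t + 1 + 1) * n ^ (t + 1)
        ≤ (n + 1) * (n ^ (t + 1) + (t + 1) * n ^ t) := by rw [key]; exact Nat.le_add_right _ _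
      _ ≤ (n + 1) * (n + 1) ^ (t + 1) := h2
      _ = (n + 1) ^ (t + 1 + 1) := h1.symm

lemma sum_pow_le (n t : ℕ) : (t + 1) * ∑ i ∈ Finset.range n, i ^ t ≤ n ^ (t + 1) := by
  induction n with
  | zero => simp
  | succ n ih =>
    rw [Finset.sum_range_succ, Nat.mul_add]
    calc (t + 1) * ∑ i ∈ Finset.range n, i ^ t + (t + 1) * n ^ t
        ≤ n ^ (t + 1) + (t + 1) * n ^ t := Nat.add_le_add_right ih _
      _ ≤ (n + 1) ^ (t + 1) := step_pow n t

lemma sum_frac_pow_le (n t : ℕ) :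
    ∑ i : Fin n, ((i : ℝ) / n) ^ t ≤ (n : ℝ) / ((t : ℝ) + 1) := by
  rcases Nat.eq_zero_or_pos n with h | hn
  · subst h; simp
  have hnat : ((t : ℝ) + 1) * ∑ i ∈ Finset.range n, (i : ℝ) ^ t ≤ (n : ℝ) ^ (t + 1) := by
    exact_mod_cast sum_pow_le n t
  have hpos : (0 : ℝ) < (n : ℝ) ^ t := by positivity
  have ht1 : (0 : ℝ) < (t : ℝ) + 1 := by positivity
  have hrw : ∑ i : Fin n, ((i : ℝ) / n) ^ t
      = (∑ i ∈ Finset.range n, (i : ℝ) ^ t) / (n : ℝ) ^ t := by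
    rw [Finset.sum_div, Fin.sum_univ_eq_sum_range (fun i => ((i : ℝ) / n) ^ t)]
    exact Finset.sum_congr rfl fun i _ => by rw [div_pow]
  rw [hrw, div_le_div_iff₀ hpos ht1]
  calc (∑ i ∈ Finset.range n, (i : ℝ) ^ t) * ((t : ℝ) + 1)
      = ((t : ℝ) + 1) * ∑ i ∈ Finset.range n, (i : ℝ) ^ t := by ring
    _ ≤ (n : ℝ) ^ (t + 1) := hnat
    _ = (n : ℝ) * (n : ℝ) ^ t := by ring

lemma pmom_le (X : Type) [Fintype X] [DecidableEq X] (t : ℕ) (p : X → ℝ)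
    (hp : ∀ x, 0 ≤ p x) (hsum : ∑ x : X, p x = 1) (l : ℝ) (hl : 0 ≤ l) :
    pmomX X t p ≤ (1 - ∑ x : X, min (p x) l) + l * (Fintype.card X : ℝ) / ((t : ℝ) + 1) := by
  unfold pmomX
  set n := Fintype.card X with hn
  apply Finset.sup'_le
  intro e _
  have hterm : ∀ i : Fin n, ((i : ℝ) / n) ^ t * p (e i)
      ≤ (p (e i) - min (p (e i)) l) + ((i : ℝ) / n) ^ t * l := by
    intro i
    have h0 : (0 : ℝ) ≤ (i : ℝ) / n := by positivity
    have h1 : (i : ℝ) / n ≤ 1 := by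
      rcases Nat.eq_zero_or_pos n with h | hpos
      · exact absurd i.2 (by omega)
      · rw [div_le_one (by exact_mod_cast hpos)]
        exact_mod_cast (i.2).le
    have ha0 : (0 : ℝ) ≤ ((i : ℝ) / n) ^ t := by positivity
    have ha1 : ((i : ℝ) / n) ^ t ≤ 1 := pow_le_one₀ h0 h1
    have hm1 : min (p (e i)) l ≤ p (e i) := min_le_left _ _
    have hm2 : min (p (e i)) l ≤ l := min_le_right _ _
    nlinarith [mul_nonneg (sub_nonneg.2 ha1) (sub_nonneg.2 hm1),
      mul_nonneg ha0 (sub_nonneg.2 hm2)]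
  calc ∑ i : Fin n, ((i : ℝ) / n) ^ t * p (e i)
      ≤ ∑ i : Fin n, ((p (e i) - min (p (e i)) l) + ((i : ℝ) / n) ^ t * l) :=
        Finset.sum_le_sum fun i _ => hterm i
    _ = (∑ i : Fin n, p (e i)) - (∑ i : Fin n, min (p (e i)) l)
        + (∑ i : Fin n, ((i : ℝ) / n) ^ t) * l := by
        rw [Finset.sum_add_distrib, Finset.sum_sub_distrib, Finset.sum_mul]
    _ = 1 - (∑ x : X, min (p x) l) + (∑ i : Fin n, ((i : ℝ) / n) ^ t) * l := by
        rw [Equiv.sum_comp e p, Equiv.sum_comp e (fun x => min (p x) l), hsum]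
    _ ≤ 1 - (∑ x : X, min (p x) l) + ((n : ℝ) / ((t : ℝ) + 1)) * l := by
        have := sum_frac_pow_le n t
        nlinarith [this, hl]
    _ = (1 - ∑ x : X, min (p x) l) + l * (n : ℝ) / ((t : ℝ) + 1) := by ring

/-- Bound on the averaged permuted moment of a kernel which is constant on the
cells of a partition of `X × X`. -/
theorem avg_pmom_bound (X ι : Type) [Fintype X] [DecidableEq X] [Fintype ι]
    (K : X → X → ℝ) (f : ι → ℝ) (Ω : ι → Set (X × X)) (t : ℕ)
    (hsymm : ∀ x y, K x y = K y x)
    (hnonneg : ∀ x y, 0 ≤ K x y)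
    (hrow : ∀ x, ∑ y : X, K x y = 1)
    (hcover : ∀ p : X × X, ∃ k, p ∈ Ω k)
    (hdisj : Pairwise (Function.onFun Disjoint Ω))
    (hval : ∀ k, ∀ p ∈ Ω k, K p.1 p.2 = f k / (Fintype.card X : ℝ))
    (hf : ∀ k, 0 ≤ f k)
    (S' : Finset ι) (hS' : S'.Nonempty) :
    (1 / (Fintype.card X : ℝ)) * ∑ x : X, pmomX X t (K x) ≤
      (1 - ∑ k ∈ S', (((Ω k).ncard : ℝ) / ((Fintype.card X : ℝ) ^ 2)) * f k)
        + (1 / ((t : ℝ) + 1)) * S'.sup' hS' f := by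
  classical
  obtain ⟨k₀, hk₀⟩ := hS'
  have hM0 : 0 ≤ S'.sup' ⟨k₀, hk₀⟩ f := le_trans (hf k₀) (Finset.le_sup' f hk₀)
  have ht1 : (0 : ℝ) < (t : ℝ) + 1 := by positivity
  rcases Nat.eq_zero_or_pos (Fintype.card X) with hX | hXpos
  · -- empty case
    simp only [hX, Nat.cast_zero, div_zero, zero_mul]
    have hz : ∀ k ∈ S', (((Ω k).ncard : ℝ) / ((0:ℝ) ^ 2)) * f k = 0 := by
      intro k _; simp
    rw [Finset.sum_congr rfl hz, Finset.sum_const, smul_zero]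
    nlinarith [mul_nonneg (le_of_lt (one_div_pos.mpr ht1)) hM0]
  -- main case
  set n' : ℝ := (Fintype.card X : ℝ) with hn'
  have hn'pos : 0 < n' := Nat.cast_pos.mpr hXpos
  have hn'ne : n' ≠ 0 := ne_of_gt hn'pos
  set M : ℝ := S'.sup' ⟨k₀, hk₀⟩ f with hM
  have hMn : 0 ≤ M / n' := div_nonneg hM0 hn'pos.le
  set A : ι → X → Finset X := fun k x => Finset.univ.filter (fun y => (x, y) ∈ Ω k) with hA
  -- counting
  have hcount : ∀ k, ((Ω k).ncard : ℝ) = ∑ x : X, ((A k x).card : ℝ) := by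
    intro k
    have h1 : (Ω k).ncard = (Finset.univ.filter (fun p : X × X => p ∈ Ω k)).card := by
      rw [Set.ncard_eq_toFinset_card']
      congr 1
      ext p
      simp
    have h2 : (Finset.univ.filter (fun p : X × X => p ∈ Ω k)).card
        = ∑ x : X, (A k x).card := by
      simp only [Finset.card_filter, Fintype.sum_prod_type, hA]
    rw [h1, h2]
    push_cast
    rfl
  -- step 2
  have step2 : ∀ x : X, ∑ k ∈ S', (f k / n') * ((A k x).card : ℝ)
      ≤ ∑ y : X, min (K x y) (M / n') := by
    intro x
    have hpd : (↑S' : Set ι).PairwiseDisjoint (fun k => A k x) := by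
      intro k _ k' _ hkk'
      simp only [Function.onFun, Finset.disjoint_left, hA, Finset.mem_filter]
      rintro y ⟨-, hy⟩ ⟨-, hy'⟩
      exact Set.disjoint_left.mp (hdisj hkk') hy hy'
    calc ∑ k ∈ S', (f k / n') * ((A k x).card : ℝ)
        = ∑ k ∈ S', ∑ y ∈ A k x, min (K x y) (M / n') := by
          refine Finset.sum_congr rfl fun k hk => ?_
          have hv : ∀ y ∈ A k x, min (K x y) (M / n') = f k / n' := by
            intro y hy
            have hxy : (x, y) ∈ Ω k := (Finset.mem_filter.mp hy).2
            rw [hval k (x, y) hxy]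
            exact min_eq_left ((div_le_div_iff_of_pos_right hn'pos).mpr (Finset.le_sup' f hk))
          rw [Finset.sum_congr rfl hv, Finset.sum_const, nsmul_eq_mul, mul_comm]
      _ = ∑ y ∈ S'.biUnion (fun k => A k x), min (K x y) (M / n') :=
          (Finset.sum_biUnion hpd).symm
      _ ≤ ∑ y : X, min (K x y) (M / n') :=
          Finset.sum_le_sum_of_subset_of_nonneg (Finset.subset_univ _)
            (fun y _ _ => le_min (hnonneg x y) hMn)
  -- totals
  have main : ∑ x : X, pmomX X t (K x)
      ≤ n' * ((1 - ∑ k ∈ S', (((Ω k).ncard : ℝ) / (n' ^ 2)) * f k)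
          + (1 / ((t : ℝ) + 1)) * M) := by
    calc ∑ x : X, pmomX X t (K x)
        ≤ ∑ x : X, ((1 - ∑ y : X, min (K x y) (M / n')) + M / ((t : ℝ) + 1)) := by
          refine Finset.sum_le_sum fun x _ => ?_
          have h := pmom_le X t (K x) (hnonneg x) (hrow x) (M / n') hMn
          calc pmomX X t (K x)
              ≤ (1 - ∑ y : X, min (K x y) (M / n')) + (M / n') * n' / ((t : ℝ) + 1) := h
            _ = (1 - ∑ y : X, min (K x y) (M / n')) + M / ((t : ℝ) + 1) := by
                rw [div_mul_cancel₀ M hn'ne]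
      _ ≤ ∑ x : X, ((1 - ∑ k ∈ S', (f k / n') * ((A k x).card : ℝ)) + M / ((t : ℝ) + 1)) := by
          refine Finset.sum_le_sum fun x _ => ?_
          have := step2 x
          linarith
      _ = (n' : ℝ) * (1 + M / ((t : ℝ) + 1))
          - ∑ k ∈ S', (f k / n') * ((Ω k).ncard : ℝ) := by
          rw [Finset.sum_add_distrib, Finset.sum_sub_distrib, Finset.sum_const,
            Finset.sum_const, Finset.card_univ, Finset.sum_comm]
          have : ∀ k ∈ S', ∑ x : X, (f k / n') * ((A k x).card : ℝ)
              = (f k / n') * ((Ω k).ncard : ℝ) := by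
            intro k _
            rw [← Finset.mul_sum, ← hcount k]
          rw [Finset.sum_congr rfl this]
          push_cast
          ring
      _ = n' * ((1 - ∑ k ∈ S', (((Ω k).ncard : ℝ) / (n' ^ 2)) * f k)
          + (1 / ((t : ℝ) + 1)) * M) := by
          have hsum : n' * ∑ k ∈ S', (((Ω k).ncard : ℝ) / (n' ^ 2)) * f k
              = ∑ k ∈ S', (f k / n') * ((Ω k).ncard : ℝ) := by
            rw [Finset.mul_sum]
            refine Finset.sum_congr rfl fun k _ => ?_
            field_simp
          linear_combination hsum
  calc (1 / n') * ∑ x : X, pmomX X t (K x)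
      ≤ (1 / n') * (n' * ((1 - ∑ k ∈ S', (((Ω k).ncard : ℝ) / (n' ^ 2)) * f k)
          + (1 / ((t : ℝ) + 1)) * M)) := by
        exact mul_le_mul_of_nonneg_left main (by positivity)
    _ = (1 - ∑ k ∈ S', (((Ω k).ncard : ℝ) / (n' ^ 2)) * f k)
          + (1 / ((t : ℝ) + 1)) * M := by
        rw [one_div, inv_mul_cancel_left₀ hn'ne]
end
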